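/- Let F*A be a twisted group algebra of a finitely generated free abelian group A over a field F. Suppose E₁ and C₀ are subgroups of A such that F*E₁ and F*C₀ are both commutative, the intersection E₁ ∩ C₀ is nontrivial, and the product E₁C₀ has finite index in A. Then the center of F*A strictly contains F. -/

import Mathlib

open Module Filter ENNReal

/-- A twisted group algebra `F*A` of the (additive) abelian group `A` over the field `F`:
the `F`-algebra `R` is free as an `F`-module with basis `{of a : a ∈ A}`, the basis elements
multiply according to a 2-cocycle with values in `Fˣ`, and the scalars of `F` are central
(built into the `Algebra F R` structure). -/
structure TwistedGroupAlgebra (F : Type*) [Field F] (A : Type*) [AddCommGroup A]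
    (R : Type*) [Ring R] [Algebra F R] where
  of : A → R
  basis : Basis A F R
  basis_eq : ∀ a : A, basis a = of a
  cocycle : A → A → Fˣ
  of_mul : ∀ a b : A, of a * of b = (cocycle a b : F) • of (a + b)
  of_zero : of 0 = 1

namespace TwistedGroupAlgebra

variable {F A R : Type*} [Field F] [AddCommGroup A] [Ring R] [Algebra F R]

/-- The subalgebra `F*C` of `F*A` determined by a subgroup `C ≤ A`, as the `F`-linear span
of the basis elements coming from `C`. -/
def sub (T : TwistedGroupAlgebra F A R) (C : AddSubgroup A) : Submodule F R :=
  Submodule.span F (T.of '' (C : Set A))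

/-- `F*C` is commutative. -/
def IsCommutativeOn (T : TwistedGroupAlgebra F A R) (C : AddSubgroup A) : Prop :=
  ∀ c₁ ∈ C, ∀ c₂ ∈ C, Commute (T.of c₁) (T.of c₂)

/-- `M` is finitely generated as an `F*C`-module: there is a finite subset `s` of `M` such that
the `F`-span of `{ c̄ • m : c ∈ C, m ∈ s }` (that is, the `F*C`-submodule generated by `s`)
is all of `M`. -/
def FGOn (T : TwistedGroupAlgebra F A R) (C : AddSubgroup A)
    (M : Type*) [AddCommGroup M] [Module R M] [Module F M] : Prop :=
  ∃ s : Finset M, Submodule.span F {x : M | ∃ c ∈ C, ∃ m ∈ s, x = T.of c • m} = ⊤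

/-- `M` is torsion-free as an `F*C`-module: no nonzero element of `M` is annihilated by a
nonzero element of `F*C`. -/
def TorsionFreeOn (T : TwistedGroupAlgebra F A R) (C : AddSubgroup A)
    (M : Type*) [AddCommGroup M] [Module R M] : Prop :=
  ∀ β ∈ T.sub C, ∀ m : M, β • m = 0 → β = 0 ∨ m = 0

/-- `M` is `F*C`-torsion: every element of `M` is annihilated by some nonzero element
of `F*C`. -/
def IsTorsionOn (T : TwistedGroupAlgebra F A R) (C : AddSubgroup A)
    (M : Type*) [AddCommGroup M] [Module R M] : Prop :=
  ∀ m : M, ∃ β ∈ T.sub C, β ≠ 0 ∧ β • m = 0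

end TwistedGroupAlgebra

namespace TwistedGroupAlgebra

variable {F A R : Type*} [Field F] [AddCommGroup A] [Ring R] [Algebra F R]
variable (T : TwistedGroupAlgebra F A R)

lemma of_ne_zero (x : A) : T.of x ≠ 0 := by
  rw [← T.basis_eq]; exact T.basis.ne_zero x

lemma smul_cancel {c d : F} {z : R} (hz : z ≠ 0) (h : c • z = d • z) : c = d := by
  by_contra hcd
  have h' : (c - d) • z = 0 := by rw [sub_smul, h, sub_self]
  rcases smul_eq_zero.mp h' with h'' | h''
  · exact hcd (sub_eq_zero.mp h'')
  · exact hz h''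

lemma of_mul_of_ne_zero (x y : A) : T.of x * T.of y ≠ 0 := by
  rw [T.of_mul]
  exact smul_ne_zero (Units.ne_zero _) (T.of_ne_zero _)

/-- The commutator scalar. -/
noncomputable def mu (x y : A) : F := (T.cocycle x y : F) * (T.cocycle y x : F)⁻¹

lemma mu_spec (x y : A) : T.of x * T.of y = T.mu x y • (T.of y * T.of x) := by
  rw [T.of_mul, T.of_mul, add_comm y x, smul_smul, mu]
  congr 1
  field_simp

lemma pow_right (x y : A) (n : ℕ) :
    T.of x * T.of y ^ n = T.mu x y ^ n • (T.of y ^ n * T.of x) := by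
  induction n with
  | zero => simp
  | succ n ih =>
    calc T.of x * T.of y ^ (n + 1) = (T.of x * T.of y ^ n) * T.of y := by
          rw [pow_succ, mul_assoc]
      _ = T.mu x y ^ n • (T.of y ^ n * (T.of x * T.of y)) := by
          rw [ih, smul_mul_assoc, mul_assoc]
      _ = T.mu x y ^ n • (T.of y ^ n * (T.mu x y • (T.of y * T.of x))) := by rw [T.mu_spec]
      _ = T.mu x y ^ (n + 1) • (T.of y ^ (n + 1) * T.of x) := by
          rw [mul_smul_comm, smul_smul]
          congr 1
          · rw [pow_succ]
          · rw [pow_succ, mul_assoc]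

lemma pow_left (x y : A) (n : ℕ) :
    T.of x ^ n * T.of y = T.mu x y ^ n • (T.of y * T.of x ^ n) := by
  induction n with
  | zero => simp
  | succ n ih =>
    calc T.of x ^ (n + 1) * T.of y = T.of x ^ n * (T.of x * T.of y) := by
          rw [pow_succ, mul_assoc]
      _ = T.of x ^ n * (T.mu x y • (T.of y * T.of x)) := by rw [T.mu_spec]
      _ = T.mu x y • ((T.of x ^ n * T.of y) * T.of x) := by
          rw [mul_smul_comm, mul_assoc]
      _ = T.mu x y • (T.mu x y ^ n • (T.of y * T.of x ^ n) * T.of x) := by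
          rw [ih]
      _ = T.mu x y ^ (n + 1) • (T.of y * T.of x ^ (n + 1)) := by
          rw [smul_mul_assoc, smul_smul]
          congr 1
          · rw [pow_succ']
          · rw [pow_succ, mul_assoc]

lemma exists_pow (y : A) (n : ℕ) : ∃ c : Fˣ, T.of y ^ n = (c : F) • T.of (n • y) := by
  induction n with
  | zero => exact ⟨1, by simp [T.of_zero]⟩
  | succ n ih =>
    obtain ⟨c, hc⟩ := ih
    refine ⟨c * T.cocycle (n • y) y, ?_⟩
    rw [pow_succ, hc, smul_mul_assoc, T.of_mul, smul_smul, succ_nsmul, Units.val_mul]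

lemma commute_nsmul (x y : A) (n : ℕ) (h : Commute (T.of x) (T.of (n • y))) :
    Commute (T.of (n • x)) (T.of y) := by
  obtain ⟨c, hc⟩ := T.exists_pow y n
  obtain ⟨d, hd⟩ := T.exists_pow x n
  have h1 : T.of x * T.of y ^ n = T.of y ^ n * T.of x := by
    rw [hc, mul_smul_comm, smul_mul_assoc, h.eq]
  have h2 : T.mu x y ^ n • (T.of y ^ n * T.of x) = (1 : F) • (T.of y ^ n * T.of x) := by
    rw [one_smul, ← T.pow_right, h1]
  have hz : T.of y ^ n * T.of x ≠ 0 := by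
    rw [hc, smul_mul_assoc]
    exact smul_ne_zero (Units.ne_zero c) (T.of_mul_of_ne_zero _ _)
  have hmu : T.mu x y ^ n = 1 := smul_cancel hz h2
  have h3 : T.of x ^ n * T.of y = T.of y * T.of x ^ n := by
    rw [T.pow_left, hmu, one_smul]
  have h4 : T.of (n • x) = ((d⁻¹ : Fˣ) : F) • T.of x ^ n := by
    rw [hd, smul_smul, ← Units.val_mul, inv_mul_cancel, Units.val_one, one_smul]
  show T.of (n • x) * T.of y = T.of y * T.of (n • x)
  rw [h4, smul_mul_assoc, mul_smul_comm, h3]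

lemma cocycle_neg (b : A) : (T.cocycle b (-b) : F) = T.cocycle (-b) b := by
  have h1 : (T.of b * T.of (-b)) * T.of b = (T.cocycle b (-b) : F) • T.of b := by
    rw [T.of_mul, add_neg_cancel, T.of_zero, smul_mul_assoc, one_mul]
  have h2 : T.of b * (T.of (-b) * T.of b) = (T.cocycle (-b) b : F) • T.of b := by
    rw [T.of_mul, neg_add_cancel, T.of_zero, mul_smul_comm, mul_one]
  exact smul_cancel (T.of_ne_zero b) (by rw [← h1, ← h2, mul_assoc])

/-- `T.of b` as a unit of `R`. -/
noncomputable def ofUnit (b : A) : Rˣ where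
  val := T.of b
  inv := ((T.cocycle b (-b) : F))⁻¹ • T.of (-b)
  val_inv := by
    rw [mul_smul_comm, T.of_mul, add_neg_cancel, T.of_zero, smul_smul,
      inv_mul_cancel₀ (Units.ne_zero _), one_smul]
  inv_val := by
    rw [smul_mul_assoc, T.of_mul, neg_add_cancel, T.of_zero, smul_smul, ← T.cocycle_neg,
      inv_mul_cancel₀ (Units.ne_zero _), one_smul]

/-- The subgroup of elements of `A` whose basis element commutes with `T.of a`. -/
noncomputable def commuteSubgroup (a : A) : AddSubgroup A where
  carrier := {b | Commute (T.of a) (T.of b)}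
  zero_mem' := by
    simp only [Set.mem_setOf_eq, T.of_zero]
    exact Commute.one_right _
  add_mem' := by
    intro b c hb hc
    simp only [Set.mem_setOf_eq] at *
    have h : T.of (b + c) = ((T.cocycle b c : F))⁻¹ • (T.of b * T.of c) := by
      rw [T.of_mul, smul_smul, inv_mul_cancel₀ (Units.ne_zero _), one_smul]
    rw [h]
    exact (hb.mul_right hc).smul_right _
  neg_mem' := by
    intro b hb
    simp only [Set.mem_setOf_eq] at *
    have hu : Commute (T.of a) ((T.ofUnit b : Rˣ) : R) := hb
    have h2 : Commute (T.of a) (((T.ofUnit b)⁻¹ : Rˣ) : R) := hu.units_inv_right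
    have h3 : (((T.ofUnit b)⁻¹ : Rˣ) : R) = ((T.cocycle b (-b) : F))⁻¹ • T.of (-b) := rfl
    rw [h3] at h2
    have h4 := h2.smul_right (T.cocycle b (-b) : F)
    rwa [smul_smul, mul_inv_cancel₀ (Units.ne_zero _), one_smul] at h4

lemma commute_all {m : A} (h : ∀ b : A, Commute (T.of m) (T.of b)) (r : R) :
    Commute (T.of m) r := by
  have hspan : r ∈ Submodule.span F (Set.range T.of) := by
    have heq : ⇑T.basis = T.of := funext T.basis_eq
    rw [← heq, T.basis.span_eq]
    trivial
  induction hspan using Submodule.span_induction with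
  | mem x hx => obtain ⟨b, rfl⟩ := hx; exact h b
  | zero => exact Commute.zero_right _
  | add x y _ _ hx hy => exact hx.add_right hy
  | smul c x _ hx => exact hx.smul_right c

end TwistedGroupAlgebra


/-- The Gelfand–Kirillov dimension of a module `M` over an `F`-algebra `R`: the supremum over
finite-dimensional `F`-subspaces `V ≤ R` and `W ≤ M` of `limsup_n log dim_F (Vⁿ·W) / log n`. -/
noncomputable def gkDim (F : Type*) [Field F] (R : Type*) [Ring R] [Algebra F R]
    (M : Type*) [AddCommGroup M] [Module R M] [Module F M] [IsScalarTower F R M] : ℝ≥0∞ :=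
  ⨆ (V : Submodule F R) (_ : V.FG) (W : Submodule F M) (_ : W.FG),
    Filter.limsup
      (fun n : ℕ =>
        ENNReal.ofReal
          (Real.log (Module.finrank F
            ↥(Submodule.span F (Set.image2 (· • ·) ((V ^ n : Submodule F R) : Set R) (W : Set M))))
           / Real.log n))
      Filter.atTop

/-- If `E₁, C₀ ≤ A` are subgroups with `F*E₁` and `F*C₀` commutative, `E₁ ∩ C₀` nontrivial and
`E₁C₀` of finite index in `A`, then the center of the twisted group algebra `F*A` strictly
contains `F`. -/
theorem center_gt_of_commutative_virtual_cover
    {F A R : Type*} [Field F]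
    [AddCommGroup A] [Module.Free ℤ A] [Module.Finite ℤ A]
    [Ring R] [Algebra F R] (T : TwistedGroupAlgebra F A R)
    (E₁ C₀ : AddSubgroup A)
    (hE₁ : T.IsCommutativeOn E₁) (hC₀ : T.IsCommutativeOn C₀)
    (hint : E₁ ⊓ C₀ ≠ ⊥) (hidx : (E₁ ⊔ C₀).FiniteIndex) :
    ⊥ < Subalgebra.center F R := by
  obtain ⟨a, haI, ha0⟩ : ∃ a ∈ E₁ ⊓ C₀, a ≠ 0 := by
    by_contra h
    push_neg at h
    exact hint ((AddSubgroup.eq_bot_iff_forall _).mpr h)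
  set n := (E₁ ⊔ C₀).index with hn
  have hn0 : n ≠ 0 := hidx.index_ne_zero
  have hSle : E₁ ⊔ C₀ ≤ T.commuteSubgroup a := by
    apply sup_le
    · intro b hb; exact hE₁ a (AddSubgroup.mem_inf.mp haI).1 b hb
    · intro b hb; exact hC₀ a (AddSubgroup.mem_inf.mp haI).2 b hb
  have hcomm : ∀ b : A, Commute (T.of (n • a)) (T.of b) := fun b =>
    T.commute_nsmul a b n (hSle (AddSubgroup.nsmul_index_mem _ b))
  have hna : n • a ≠ 0 := by
    intro h
    have h' : (n : ℤ) • a = 0 := by rwa [natCast_zsmul]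
    rcases smul_eq_zero.mp h' with h'' | h''
    · exact hn0 (by exact_mod_cast h'')
    · exact ha0 h''
  have hcen : T.of (n • a) ∈ Subalgebra.center F R :=
    Subalgebra.mem_center_iff.mpr fun r => ((T.commute_all hcomm r).symm).eq
  have hnotbot : T.of (n • a) ∉ (⊥ : Subalgebra F R) := by
    intro hmem
    rw [Algebra.mem_bot] at hmem
    obtain ⟨c, hc⟩ := hmem
    have h1 : T.basis (n • a) = c • T.basis 0 := by
      rw [T.basis_eq, T.basis_eq, T.of_zero, ← Algebra.algebraMap_eq_smul_one, hc]
    have h2 : (1 : F) = 0 := by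
      have h3 := congrArg (fun r => (T.basis.repr r) (n • a)) h1
      simp only [Basis.repr_self, map_smul, Finsupp.smul_apply, Finsupp.single_eq_same,
        Finsupp.single_eq_of_ne' (Ne.symm hna), smul_zero] at h3
      exact h3
    exact one_ne_zero h2
  exact SetLike.lt_iff_le_and_exists.mpr ⟨bot_le, T.of (n • a), hcen, hnotbot⟩
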